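/- If there exists x ∈ ℚ≥0^T with m = m₀ + C·x and supp(x) ∈ fs(N⁻¹, m), then for every trap Q of N that is marked in m₀, Q is marked in m. (I.e., conditions (i) and (iii) of the continuous reachability characterization imply the trap condition of Esparza et al.) -/

import Mathlib

section PetriNet

variable {P T : Type*}

/-- Discrete enabledness: `m(p) ≥ Pre(p,t)` for all places `p`. -/
def Enabled (Pre : P → T → ℕ) (m : P → ℕ) (t : T) : Prop :=
  ∀ p, Pre p t ≤ m p

/-- Discrete firing of transition `t` at marking `m`, yielding `m'`. -/
def DFire (Pre Post : P → T → ℕ) (m : P → ℕ) (t : T) (m' : P → ℕ) : Prop :=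
  Enabled Pre m t ∧ ∀ p, m' p = m p + Post p t - Pre p t

/-- One discrete step. -/
def DStep (Pre Post : P → T → ℕ) (m m' : P → ℕ) : Prop :=
  ∃ t, DFire Pre Post m t m'

/-- Discrete reachability. -/
def DReach (Pre Post : P → T → ℕ) : (P → ℕ) → (P → ℕ) → Prop :=
  Relation.ReflTransGen (DStep Pre Post)

/-- Continuous firing of `t` by amount `q` (amount is at most the enabling degree). -/
def CFire (Pre Post : P → T → ℕ) (m : P → ℚ) (q : ℚ) (t : T) (m' : P → ℚ) : Prop :=
  0 ≤ q ∧ (∀ p, q * (Pre p t : ℚ) ≤ m p) ∧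
    ∀ p, m' p = m p + q * ((Post p t : ℚ) - (Pre p t : ℚ))

/-- One continuous step. -/
def CStep (Pre Post : P → T → ℕ) (m m' : P → ℚ) : Prop :=
  ∃ t q, CFire Pre Post m q t m'

/-- Continuous (Q-)reachability. -/
def QReach (Pre Post : P → T → ℕ) : (P → ℚ) → (P → ℚ) → Prop :=
  Relation.ReflTransGen (CStep Pre Post)

/-- A Q-firing sequence `σ` from `m` to `m'`. -/
inductive CSeq (Pre Post : P → T → ℕ) : (P → ℚ) → List (ℚ × T) → (P → ℚ) → Prop
  | nil (m : P → ℚ) : CSeq Pre Post m [] m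
  | cons {m m' m'' : P → ℚ} {q : ℚ} {t : T} {σ : List (ℚ × T)} :
      CFire Pre Post m q t m' → CSeq Pre Post m' σ m'' →
      CSeq Pre Post m ((q, t) :: σ) m''

/-- Q-Parikh image of a firing sequence. -/
def Parikh [DecidableEq T] (σ : List (ℚ × T)) (t : T) : ℚ :=
  (σ.map (fun qt => if qt.2 = t then qt.1 else 0)).sum

/-- The firing set `fs(N, m)`: supports of Parikh images of Q-firing sequences from `m`. -/
def Fs [DecidableEq T] (Pre Post : P → T → ℕ) (m : P → ℚ) : Set (Set T) :=
  {S | ∃ σ m', CSeq Pre Post m σ m' ∧ S = {t | Parikh σ t ≠ 0}}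

/-- A trap: non-empty `Q` with `Q• ⊆ •Q`. -/
def IsTrap (Pre Post : P → T → ℕ) (Q : Finset P) : Prop :=
  Q.Nonempty ∧ ∀ t, (∃ p ∈ Q, 0 < Pre p t) → ∃ p ∈ Q, 0 < Post p t

/-- A siphon: non-empty `Q` with `•Q ⊆ Q•`. -/
def IsSiphon (Pre Post : P → T → ℕ) (Q : Finset P) : Prop :=
  Q.Nonempty ∧ ∀ t, (∃ p ∈ Q, 0 < Post p t) → ∃ p ∈ Q, 0 < Pre p t

end PetriNet

/-- conditions (i) and (iii) of the continuous-reachability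
characterization (state equation, and `supp(x) ∈ fs(N⁻¹, m)`) imply the trap
condition: every trap marked in `m₀` is marked in `m`. -/
theorem stmt17 {P T : Type*} [Fintype T] [DecidableEq T] (Pre Post : P → T → ℕ)
    (m₀ m : P → ℚ) (h₀ : ∀ p, 0 ≤ m₀ p) (hm : ∀ p, 0 ≤ m p)
    (x : T → ℚ) (hx : ∀ t, 0 ≤ x t)
    (heq : ∀ p, m p = m₀ p + ∑ t : T, x t * ((Post p t : ℚ) - (Pre p t : ℚ)))
    (hfs : {t | x t ≠ 0} ∈ Fs Post Pre m) :
    ∀ Q : Finset P, IsTrap Pre Post Q →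
      0 < ∑ p ∈ Q, m₀ p → 0 < ∑ p ∈ Q, m p := by
  intro Q hQ hpos
  by_contra hneg
  push_neg at hneg
  have hsum0 : ∑ p ∈ Q, m p = 0 :=
    le_antisymm hneg (Finset.sum_nonneg fun p _ => hm p)
  have hzero : ∀ p ∈ Q, m p = 0 :=
    (Finset.sum_eq_zero_iff_of_nonneg fun p _ => hm p).mp hsum0
  obtain ⟨σ, m', hseq, hsupp⟩ := hfs
  -- one continuous step of the reverse net preserves emptiness of Q and
  -- any transition fired with nonzero amount does not touch Q
  have step : ∀ (a b : P → ℚ) (q : ℚ) (t : T), CFire Post Pre a q t b →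
      (∀ p ∈ Q, a p = 0) →
      (∀ p ∈ Q, b p = 0) ∧ (q ≠ 0 → ∀ p ∈ Q, Post p t = 0 ∧ Pre p t = 0) := by
    rintro a b q t ⟨hq0, hen, hupd⟩ ha
    rcases eq_or_lt_of_le hq0 with h | h
    · refine ⟨fun p hp => ?_, fun hq => absurd h.symm hq⟩
      rw [hupd p, ha p hp, ← h]; ring
    · have hPost : ∀ p ∈ Q, Post p t = 0 := by
        intro p hp
        by_contra hne
        have h1 : (0:ℚ) < q * (Post p t : ℚ) :=
          mul_pos h (by exact_mod_cast Nat.pos_of_ne_zero hne)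
        have h2 := hen p
        rw [ha p hp] at h2
        linarith
      have hPre : ∀ p ∈ Q, Pre p t = 0 := by
        intro p hp
        by_contra hne
        obtain ⟨p', hp', hpos'⟩ := hQ.2 t ⟨p, hp, Nat.pos_of_ne_zero hne⟩
        simp [hPost p' hp'] at hpos'
      refine ⟨fun p hp => ?_, fun _ p hp => ⟨hPost p hp, hPre p hp⟩⟩
      rw [hupd p, ha p hp, hPost p hp, hPre p hp]
      norm_num
  -- along a sequence from an empty Q, no fired transition touches Q
  have key : ∀ (σ : List (ℚ × T)) (a b : P → ℚ), CSeq Post Pre a σ b →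
      (∀ p ∈ Q, a p = 0) →
      ∀ qt ∈ σ, qt.1 ≠ 0 → ∀ p ∈ Q, Post p qt.2 = 0 ∧ Pre p qt.2 = 0 := by
    intro σ
    induction σ with
    | nil => intro a b _ _ qt hqt; exact absurd hqt List.not_mem_nil
    | cons hd tl ih =>
      intro a b hseq ha
      cases hseq with
      | cons hfire hrest =>
        obtain ⟨hb, htr⟩ := step _ _ _ _ hfire ha
        intro qt hqt hq
        rcases List.mem_cons.mp hqt with h | h
        · subst h; exact htr hq
        · exact ih _ _ hrest hb qt h hq
  have hpar : ∀ t, x t ≠ 0 → ∀ p ∈ Q, Post p t = 0 ∧ Pre p t = 0 := by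
    intro t hxt
    have hP : Parikh σ t ≠ 0 := (Set.ext_iff.mp hsupp t).mp hxt
    have hex : ∃ qt ∈ σ, qt.2 = t ∧ qt.1 ≠ 0 := by
      by_contra hc
      push_neg at hc
      apply hP
      apply List.sum_eq_zero
      intro y hy
      obtain ⟨qt, hqt, rfl⟩ := List.mem_map.mp hy
      by_cases h2 : qt.2 = t
      · simp [h2, hc qt hqt h2]
      · simp [h2]
    obtain ⟨qt, hqt, heq2, hq⟩ := hex
    subst heq2
    exact key σ m m' hseq hzero qt hqt hq
  have hfinal : ∑ p ∈ Q, m p = ∑ p ∈ Q, m₀ p := by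
    refine Finset.sum_congr rfl fun p hp => ?_
    rw [heq p]
    have hz : ∑ t : T, x t * ((Post p t : ℚ) - (Pre p t : ℚ)) = 0 := by
      apply Finset.sum_eq_zero
      intro t _
      by_cases hxt : x t = 0
      · rw [hxt]; ring
      · obtain ⟨h1, h2⟩ := hpar t hxt p hp
        rw [h1, h2]; norm_num
    rw [hz]; ring
  rw [hsum0] at hfinal
  linarith
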